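/- Let X be a measurable space, G a sub-Markov kernel on X, and ν a finite measure on X. Suppose μ is a finite measure on X satisfying μ(B) = ν(B) + ∫ G(x,B) dμ(x) for all measurable B, and suppose G^m(x,X) → 0 for each x ∈ X as m → ∞ (with G^m(x,X) ≤ 1). Then μ(B) = ∑_{k=0}^∞ ∫ G^k(x,B) dν(x) for all measurable B ⊆ X. -/

import Mathlib

open MeasureTheory ProbabilityTheory Filter

/-- The `j`-fold iterate of a kernel, with `G^0 = id` (i.e. `G^0(x,·) = δ_x`). -/
noncomputable def kernelIter {X : Type*} [MeasurableSpace X]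
    (G : Kernel X X) : ℕ → Kernel X X
  | 0 => Kernel.id
  | n + 1 => G ∘ₖ kernelIter G n

lemma kernelIter_succ' {X : Type*} [MeasurableSpace X] (G : Kernel X X) (n : ℕ) :
    kernelIter G (n + 1) = kernelIter G n ∘ₖ G := by
  induction n with
  | zero => simp [kernelIter, Kernel.comp_id, Kernel.id_comp]
  | succ n ih =>
    show G ∘ₖ kernelIter G (n + 1) = (G ∘ₖ kernelIter G n) ∘ₖ G
    rw [ih]
    ext x B hB
    rw [Kernel.comp_apply' _ _ _ hB, Kernel.comp_apply' _ _ _ hB,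
      Kernel.comp_apply, Measure.lintegral_bind (Kernel.measurable _).aemeasurable
        (Kernel.measurable_coe _ hB).aemeasurable]
    refine lintegral_congr fun z => ?_
    rw [Kernel.comp_apply' _ _ _ hB]

/-- Uniqueness of the occupation measure: a finite measure `μ` satisfying the
balance equation `μ(B) = ν(B) + ∫ G(x,B) dμ(x)`, when `G^m(x,X) → 0` pointwise
and `G^m(x,X) ≤ 1`, equals `∑ₖ νG^k`. -/
theorem stmt13 {X : Type*} [MeasurableSpace X] (G : Kernel X X)
    (ν : Measure X) [IsFiniteMeasure ν]
    (μ : Measure X) [IsFiniteMeasure μ]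
    (hbal : ∀ B : Set X, MeasurableSet B → μ B = ν B + ∫⁻ x, G x B ∂μ)
    (hbdd : ∀ (m : ℕ) (x : X), kernelIter G m x Set.univ ≤ 1)
    (hto0 : ∀ x, Tendsto (fun m => kernelIter G m x Set.univ) atTop (nhds 0)) :
    ∀ B : Set X, MeasurableSet B →
      μ B = ∑' k : ℕ, ∫⁻ x, kernelIter G k x B ∂ν := by
  intro B hB
  -- step: ∫ G^m x B ∂μ = ∫ G^m x B ∂ν + ∫ G^(m+1) x B ∂μ
  have step : ∀ m : ℕ, ∫⁻ x, kernelIter G m x B ∂μ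
      = ∫⁻ x, kernelIter G m x B ∂ν + ∫⁻ x, kernelIter G (m + 1) x B ∂μ := by
    intro m
    have hμeq : μ = ν + μ.bind (G : X → Measure X) := by
      ext s hs
      rw [Measure.add_apply, Measure.bind_apply hs (Kernel.measurable G).aemeasurable]
      exact hbal s hs
    have hf : Measurable fun y => kernelIter G m y B := Kernel.measurable_coe _ hB
    calc ∫⁻ x, kernelIter G m x B ∂μ
        = ∫⁻ x, kernelIter G m x B ∂ν
          + ∫⁻ x, kernelIter G m x B ∂(μ.bind (G : X → Measure X)) := by
          conv_lhs => rw [hμeq]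
          rw [lintegral_add_measure]
      _ = ∫⁻ x, kernelIter G m x B ∂ν + ∫⁻ x, kernelIter G (m + 1) x B ∂μ := by
          rw [Measure.lintegral_bind (Kernel.measurable G).aemeasurable hf.aemeasurable]
          congr 1
          refine lintegral_congr fun x => ?_
          rw [kernelIter_succ', Kernel.comp_apply' _ _ _ hB]
  -- iterate
  have iter : ∀ m : ℕ, μ B = (∑ j ∈ Finset.range m, ∫⁻ x, kernelIter G j x B ∂ν)
      + ∫⁻ x, kernelIter G m x B ∂μ := by
    intro m
    induction m with
    | zero =>
      simp only [Finset.range_zero, Finset.sum_empty, zero_add]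
      have h0 : ∀ x, kernelIter G 0 x B = B.indicator (1 : X → ENNReal) x := by
        intro x
        simp [kernelIter, Kernel.id_apply, Measure.dirac_apply' x hB]
      simp_rw [h0]
      rw [lintegral_indicator hB]
      simp
    | succ m ih =>
      rw [ih, step m, Finset.sum_range_succ, add_assoc]
  -- remainder tends to 0
  have hrem : Tendsto (fun m => ∫⁻ x, kernelIter G m x B ∂μ) atTop (nhds 0) := by
    have h0 : Tendsto (fun m => ∫⁻ x, kernelIter G m x Set.univ ∂μ) atTop (nhds 0) := by
      have := tendsto_lintegral_of_dominated_convergence (μ := μ)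
        (F := fun m x => kernelIter G m x Set.univ) (f := fun _ => 0)
        (bound := fun _ => 1)
        (fun m => Kernel.measurable_coe _ MeasurableSet.univ)
        (fun m => Filter.Eventually.of_forall fun x => hbdd m x)
        (by simp [measure_lt_top μ Set.univ |>.ne])
        (Filter.Eventually.of_forall fun x => hto0 x)
      simpa using this
    exact tendsto_of_tendsto_of_tendsto_of_le_of_le tendsto_const_nhds h0
      (fun m => zero_le)
      (fun m => lintegral_mono fun x => measure_mono (Set.subset_univ B))
  -- partial sums tend to the tsum
  have hsum : Tendsto (fun m => ∑ j ∈ Finset.range m, ∫⁻ x, kernelIter G j x B ∂ν)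
      atTop (nhds (∑' k : ℕ, ∫⁻ x, kernelIter G k x B ∂ν)) :=
    ENNReal.tendsto_nat_tsum _
  have : Tendsto (fun m => (∑ j ∈ Finset.range m, ∫⁻ x, kernelIter G j x B ∂ν)
      + ∫⁻ x, kernelIter G m x B ∂μ) atTop
      (nhds ((∑' k : ℕ, ∫⁻ x, kernelIter G k x B ∂ν) + 0)) :=
    Tendsto.add hsum hrem
  have hconst : Tendsto (fun _ : ℕ => μ B) atTop
      (nhds ((∑' k : ℕ, ∫⁻ x, kernelIter G k x B ∂ν) + 0)) := by
    refine this.congr fun m => (iter m).symm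
  rw [add_zero] at hconst
  exact tendsto_nhds_unique tendsto_const_nhds hconst
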